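/- Let p and q be primes with p ≡ 1 (mod q), and let t and h be elements of multiplicative order q in (Z/p)ˣ. Let Γ' be the group with presentation ⟨a, b : a^q = b^p = 1, a·b·a⁻¹ = b^t⟩ (so Γ' ≅ Z/p ⋊ Z/q has order pq), and let G' = Z/q ⋉ Γ' be the semidirect product in which the generator g of Z/q acts on Γ' by the automorphism determined by a ↦ a and b ↦ b^h; let F' = ⟨g⟩ ≤ G'. Then: (1) every subgroup of G' of order pq is normal in G'; and (2) the subgroups L ≤ G' of order pq satisfying L ∩ F' = 1 are precisely the subgroups L_k = ⟨b, g^k·a⟩ for k = 0, 1, …, q−1, and these q subgroups are pairwise distinct. -/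

import Mathlib

set_option maxHeartbeats 1000000 in
/-- Let `p, q` be primes with `p ≡ 1 (mod q)`, and `t, h` elements of multiplicative
order `q` in `(Z/p)ˣ`.  Let `G'` be the group of order `pq²` generated by elements
`a, b, g` of orders `q, p, q` subject to `a·b·a⁻¹ = b^t`, `g·b·g⁻¹ = b^h` and
`g·a·g⁻¹ = a`, i.e. `G' = Z/q ⋉ Γ'` where `Γ' = ⟨a, b : a^q = b^p = 1, aba⁻¹ = b^t⟩`
and the generator `g` of `Z/q` acts by `a ↦ a`, `b ↦ b^h`; let `F' = ⟨g⟩`.  Then: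
(1) every subgroup of `G'` of order `pq` is normal in `G'`; and
(2) the subgroups `L ≤ G'` of order `pq` with `L ∩ F' = 1` are precisely the subgroups
`L_k = ⟨b, g^k·a⟩` for `k = 0, 1, …, q−1`, and these `q` subgroups are pairwise
distinct. -/
theorem statement15 (p q : ℕ) (hp : p.Prime) (hq : q.Prime) (hmod : p % q = 1)
    (t h : (ZMod p)ˣ) (ht : orderOf t = q) (hh : orderOf h = q)
    {G' : Type*} [Group G'] [Finite G'] (a b g : G')
    (hcard : Nat.card G' = p * q ^ 2)
    (ha : orderOf a = q) (hb : orderOf b = p) (hg : orderOf g = q)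
    (hab : a * b * a⁻¹ = b ^ (t : ZMod p).val)
    (hgb : g * b * g⁻¹ = b ^ (h : ZMod p).val)
    (hga : g * a * g⁻¹ = a)
    (hgen : Subgroup.closure {a, b, g} = (⊤ : Subgroup G')) :
    -- (1) every subgroup of order pq is normal
    (∀ L : Subgroup G', Nat.card L = p * q → L.Normal) ∧
    -- (2a) each L_k = ⟨b, g^k·a⟩ has order pq and meets F' = ⟨g⟩ trivially
    (∀ kk : ℕ, kk < q →
      Nat.card (Subgroup.closure {b, g ^ kk * a} : Subgroup G') = p * q ∧
      Subgroup.closure {b, g ^ kk * a} ⊓ Subgroup.zpowers g = (⊥ : Subgroup G')) ∧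
    -- (2b) every subgroup of order pq meeting F' trivially is some L_k
    (∀ L : Subgroup G', Nat.card L = p * q → L ⊓ Subgroup.zpowers g = ⊥ →
      ∃ kk : ℕ, kk < q ∧ L = Subgroup.closure {b, g ^ kk * a}) ∧
    -- (2c) the subgroups L_0, …, L_{q−1} are pairwise distinct
    (∀ kk kk' : ℕ, kk < q → kk' < q →
      (Subgroup.closure {b, g ^ kk * a} : Subgroup G') = Subgroup.closure {b, g ^ kk' * a} →
        kk = kk') := by
  haveI : NeZero p := ⟨hp.pos.ne'⟩
  haveI : NeZero q := ⟨hq.pos.ne'⟩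
  haveI : Fact q.Prime := ⟨hq⟩
  haveI : Fact p.Prime := ⟨hp⟩
  have hq1 : 1 < q := hq.one_lt
  have hp1 : 1 < p := hp.one_lt
  have hpq : p ≠ q := by
    rintro rfl
    rw [Nat.mod_self] at hmod
    exact absurd hmod (by norm_num)
  have hcop : Nat.Coprime p q := (Nat.coprime_primes hp hq).2 hpq
  set N : Subgroup G' := Subgroup.zpowers b with hN
  have hbN : b ∈ N := Subgroup.mem_zpowers b
  have hcardN : Nat.card N = p := by rw [hN, Nat.card_zpowers, hb]
  -- a key computation with exponents modulo p
  have hpowmul : ∀ v w : (ZMod p)ˣ,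
      (b ^ ((v : ZMod p)).val) ^ ((w : ZMod p)).val
        = b ^ (((v * w : (ZMod p)ˣ) : ZMod p)).val := by
    intro v w
    rw [← pow_mul, pow_eq_pow_iff_modEq, hb, ← ZMod.natCast_eq_natCast_iff]
    push_cast
    rw [ZMod.natCast_val, ZMod.natCast_val, ZMod.natCast_val]
    simp [ZMod.cast_id]
  -- membership in the normalizer of N from a conjugation relation
  have hmemnorm : ∀ (x : G') (u : (ZMod p)ˣ),
      x * b * x⁻¹ = b ^ ((u : ZMod p)).val → x ∈ Subgroup.normalizer (N : Set G') := by
    intro x u hx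
    have hback : x⁻¹ * b * x = b ^ (((u⁻¹ : (ZMod p)ˣ) : ZMod p)).val := by
      have h1 : x * b ^ (((u⁻¹ : (ZMod p)ˣ) : ZMod p)).val * x⁻¹ = b := by
        calc x * b ^ (((u⁻¹ : (ZMod p)ˣ) : ZMod p)).val * x⁻¹
            = (x * b * x⁻¹) ^ (((u⁻¹ : (ZMod p)ˣ) : ZMod p)).val := by rw [conj_pow]
          _ = (b ^ ((u : ZMod p)).val) ^ (((u⁻¹ : (ZMod p)ˣ) : ZMod p)).val := by rw [hx]
          _ = b ^ (((u * u⁻¹ : (ZMod p)ˣ) : ZMod p)).val := hpowmul u u⁻¹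
          _ = b := by rw [mul_inv_cancel, Units.val_one, ZMod.val_one p, pow_one]
      calc x⁻¹ * b * x
          = x⁻¹ * (x * b ^ (((u⁻¹ : (ZMod p)ˣ) : ZMod p)).val * x⁻¹) * x := by rw [h1]
        _ = b ^ (((u⁻¹ : (ZMod p)ˣ) : ZMod p)).val := by group
    rw [Subgroup.mem_normalizer_iff]
    intro y
    constructor
    · rintro ⟨n, rfl⟩
      have hcz : x * b ^ n * x⁻¹ = (x * b * x⁻¹) ^ n := conj_zpow.symm
      rw [hcz, hx]
      exact Subgroup.zpow_mem N (Subgroup.pow_mem N hbN _) n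
    · rintro ⟨n, hn⟩
      have hy' : y = x⁻¹ * (x * y * x⁻¹) * x := by group
      rw [hy', ← hn]
      have hcz : x⁻¹ * b ^ n * x = (x⁻¹ * b * x) ^ n := by
        have h2 := conj_zpow (i := n) (a := x⁻¹) (b := b)
        simpa using h2.symm
      rw [hcz, hback]
      exact Subgroup.zpow_mem N (Subgroup.pow_mem N hbN _) n
  have hNnormalizer : Subgroup.normalizer (N : Set G') = ⊤ := by
    apply top_unique
    rw [← hgen]
    refine (Subgroup.closure_le _).2 ?_
    intro x hx
    simp only [Set.mem_insert_iff, Set.mem_singleton_iff] at hx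
    rcases hx with h1 | h1 | h1 <;> rw [h1] <;> [exact hmemnorm a t hab;
      exact Subgroup.le_normalizer hbN; exact hmemnorm g h hgb]
  haveI hNnormal : N.Normal := Subgroup.normalizer_eq_top_iff.mp hNnormalizer
  -- the quotient
  set π : G' →* G' ⧸ N := QuotientGroup.mk' N with hπ
  have hπsurj : Function.Surjective π := QuotientGroup.mk'_surjective N
  have hker : π.ker = N := QuotientGroup.ker_mk' N
  have hπeq1 : ∀ x : G', π x = 1 ↔ x ∈ N := by
    intro x
    exact QuotientGroup.eq_one_iff x
  have hcardQ : Nat.card (G' ⧸ N) = q ^ 2 := by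
    have h1 := Subgroup.card_eq_card_quotient_mul_card_subgroup N
    rw [hcard, hcardN] at h1
    have h2 := Nat.eq_of_mul_eq_mul_left hp.pos
      (show p * q ^ 2 = p * Nat.card (G' ⧸ N) by rw [h1]; ring)
    omega
  have hπb : π b = 1 := (hπeq1 b).mpr hbN
  -- images of a, g generate the quotient
  have hQgen : Subgroup.closure {π a, π g} = (⊤ : Subgroup (G' ⧸ N)) := by
    have him : ⇑π '' {a, b, g} = {π a, π b, π g} := by
      simp [Set.image_insert_eq]
    have h1 : Subgroup.closure {π a, π b, π g} = ⊤ := by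
      rw [← him, ← MonoidHom.map_closure, hgen, Subgroup.map_top_of_surjective π hπsurj]
    apply top_unique
    rw [← h1]
    refine (Subgroup.closure_le _).2 ?_
    intro x hx
    simp only [Set.mem_insert_iff, Set.mem_singleton_iff] at hx
    rcases hx with h2 | h2 | h2 <;> rw [h2]
    · exact Subgroup.subset_closure (by simp)
    · rw [hπb]; exact Subgroup.one_mem _
    · exact Subgroup.subset_closure (by simp)
  -- commuting generators
  have hag : g * a = a * g := mul_inv_eq_iff_eq_mul.mp hga
  have hC : Commute (π a) (π g) := by
    show π a * π g = π g * π a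
    rw [← map_mul, ← map_mul, hag]
  -- decomposition of elements in the quotient
  have hdecomp : ∀ x : G' ⧸ N, ∃ i j : ℤ, x = (π a) ^ i * (π g) ^ j := by
    intro x
    have hx : x ∈ Subgroup.closure {π a, π g} := by rw [hQgen]; trivial
    induction hx using Subgroup.closure_induction with
    | mem y hy =>
        rcases hy with h1 | h1 <;> rw [h1]
        · exact ⟨1, 0, by simp⟩
        · exact ⟨0, 1, by simp⟩
    | one => exact ⟨0, 0, by simp⟩
    | mul y z hy hz ihy ihz =>
        obtain ⟨i, j, rfl⟩ := ihy
        obtain ⟨i', j', rfl⟩ := ihz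
        refine ⟨i + i', j + j', ?_⟩
        have hsw : (π g) ^ j * (π a) ^ i' = (π a) ^ i' * (π g) ^ j :=
          ((hC.zpow_zpow i' j).eq).symm
        calc (π a) ^ i * (π g) ^ j * ((π a) ^ i' * (π g) ^ j')
            = (π a) ^ i * ((π g) ^ j * (π a) ^ i') * (π g) ^ j' := by group
          _ = (π a) ^ i * ((π a) ^ i' * (π g) ^ j) * (π g) ^ j' := by rw [hsw]
          _ = (π a) ^ (i + i') * (π g) ^ (j + j') := by
              rw [zpow_add, zpow_add]; group
    | inv y hy ihy =>
        obtain ⟨i, j, rfl⟩ := ihy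
        refine ⟨-i, -j, ?_⟩
        have hsw : (π g) ^ (-j) * (π a) ^ (-i) = (π a) ^ (-i) * (π g) ^ (-j) :=
          ((hC.zpow_zpow (-i) (-j)).eq).symm
        rw [mul_inv_rev, ← zpow_neg, ← zpow_neg, hsw]
  -- commutativity of the quotient
  have hcomm : ∀ x y : G' ⧸ N, x * y = y * x := by
    intro x y
    obtain ⟨i, j, rfl⟩ := hdecomp x
    obtain ⟨i', j', rfl⟩ := hdecomp y
    have c1 : Commute ((π a) ^ i) ((π a) ^ i' * (π g) ^ j') :=
      Commute.mul_right ((Commute.refl (π a)).zpow_zpow i i') (hC.zpow_zpow i j')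
    have c2 : Commute ((π g) ^ j) ((π a) ^ i' * (π g) ^ j') :=
      Commute.mul_right ((hC.symm).zpow_zpow j i') ((Commute.refl (π g)).zpow_zpow j j')
    exact (c1.mul_left c2).eq
  -- orders in the quotient
  have hordQ : ∀ x : G', orderOf x = q → orderOf (π x) = q := by
    intro x hx
    have hdvd : orderOf (π x) ∣ q := hx ▸ orderOf_map_dvd π x
    rcases hq.eq_one_or_self_of_dvd _ hdvd with h1 | h1
    · exfalso
      have hxN : x ∈ N := (hπeq1 x).mp (orderOf_eq_one_iff.mp h1)
      have h2 : q ∣ p := by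
        rw [← hx, ← hcardN]
        exact Subgroup.orderOf_dvd_natCard N hxN
      rcases hp.eq_one_or_self_of_dvd q h2 with h3 | h3
      · exact hq.ne_one h3
      · exact hpq h3.symm
    · exact h1
  have horderπg : orderOf (π g) = q := hordQ g hg
  have horderπa : orderOf (π a) = q := hordQ a ha
  -- π a is not a power of π g
  have hπanotin : π a ∉ Subgroup.zpowers (π g) := by
    intro hmem
    have hle : Subgroup.closure {π a, π g} ≤ Subgroup.zpowers (π g) := by
      refine (Subgroup.closure_le _).2 ?_
      intro x hx
      simp only [Set.mem_insert_iff, Set.mem_singleton_iff] at hx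
      rcases hx with h1 | h1 <;> rw [h1]
      · exact hmem
      · exact Subgroup.mem_zpowers _
    rw [hQgen] at hle
    have hcardle : Nat.card (G' ⧸ N) ≤ q := by
      calc Nat.card (G' ⧸ N) = Nat.card (⊤ : Subgroup (G' ⧸ N)) := (Subgroup.card_top).symm
        _ ≤ Nat.card (Subgroup.zpowers (π g)) := Subgroup.card_le_of_le hle
        _ = q := by rw [Nat.card_zpowers, horderπg]
    rw [hcardQ] at hcardle
    nlinarith
  -- trivial intersections with ⟨π g⟩ in the quotient
  have hinterg : ∀ x : G' ⧸ N, orderOf x = q → x ∉ Subgroup.zpowers (π g) →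
      Subgroup.zpowers x ⊓ Subgroup.zpowers (π g) = ⊥ := by
    intro x hx hnot
    by_contra hne
    have hd1 : Nat.card (Subgroup.zpowers x ⊓ Subgroup.zpowers (π g) : Subgroup (G' ⧸ N)) ∣ q := by
      rw [← hx, ← Nat.card_zpowers]
      exact Subgroup.card_dvd_of_le inf_le_left
    rcases hq.eq_one_or_self_of_dvd _ hd1 with h1 | h1
    · exact hne (Subgroup.card_eq_one.mp h1)
    · have he1 : (Subgroup.zpowers x ⊓ Subgroup.zpowers (π g) : Subgroup (G' ⧸ N))
          = Subgroup.zpowers x := by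
        apply Subgroup.eq_of_le_of_card_ge inf_le_left
        rw [h1, Nat.card_zpowers, hx]
      apply hnot
      have hxin : x ∈ Subgroup.zpowers x ⊓ Subgroup.zpowers (π g) := by
        rw [he1]; exact Subgroup.mem_zpowers x
      exact hxin.2
  -- N meets ⟨g⟩ trivially
  have hNg : N ⊓ Subgroup.zpowers g = ⊥ := by
    have hd1 : Nat.card (N ⊓ Subgroup.zpowers g : Subgroup G') ∣ p := by
      rw [← hcardN]
      exact Subgroup.card_dvd_of_le inf_le_left
    have hd2 : Nat.card (N ⊓ Subgroup.zpowers g : Subgroup G') ∣ q := by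
      rw [← hg, ← Nat.card_zpowers]
      exact Subgroup.card_dvd_of_le inf_le_right
    have hgcd : Nat.gcd p q = 1 := hcop
    have h3 := Nat.dvd_gcd hd1 hd2
    rw [hgcd] at h3
    exact Subgroup.card_eq_one.mp (Nat.dvd_one.mp h3)
  -- every subgroup of order p*q contains N
  have hNle : ∀ L : Subgroup G', Nat.card L = p * q → N ≤ L := by
    intro L hL
    obtain ⟨x, hx⟩ := exists_prime_orderOf_dvd_card' (G := L) p
      (by rw [hL]; exact dvd_mul_right p q)
    have hxG : orderOf (x : G') = p := by rw [Subgroup.orderOf_coe, hx]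
    have h1 : orderOf (π (x : G')) ∣ p := hxG ▸ orderOf_map_dvd π (x : G')
    have h2 : orderOf (π (x : G')) ∣ q ^ 2 := hcardQ ▸ orderOf_dvd_natCard _
    have h5 : π (x : G') = 1 := by
      rcases hp.eq_one_or_self_of_dvd _ h1 with h4 | h4
      · exact orderOf_eq_one_iff.mp h4
      · exfalso
        rw [h4] at h2
        have h6 := hp.dvd_of_dvd_pow h2
        rcases hq.eq_one_or_self_of_dvd p h6 with h7 | h7
        · exact hp.ne_one h7
        · exact hpq h7
    have hxN : (x : G') ∈ N := (hπeq1 _).mp h5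
    have hzx : Subgroup.zpowers (x : G') = N := by
      apply Subgroup.eq_of_le_of_card_ge (Subgroup.zpowers_le.mpr hxN)
      rw [hcardN, Nat.card_zpowers, hxG]
    rw [← hzx]
    exact Subgroup.zpowers_le.mpr x.2
  -- Part (1)
  have part1 : ∀ L : Subgroup G', Nat.card L = p * q → L.Normal := by
    intro L hL
    have hNL := hNle L hL
    have hLeq : Subgroup.comap π (Subgroup.map π L) = L := by
      rw [Subgroup.comap_map_eq, hker, sup_of_le_left hNL]
    rw [← hLeq]
    have hnormQ : (Subgroup.map π L).Normal := by
      constructor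
      intro n hn x
      rw [hcomm x n, mul_assoc, mul_inv_cancel, mul_one]
      exact hn
    exact Subgroup.Normal.comap hnormQ π
  -- commutation of g and a
  have hCga : Commute g a := hag
  -- Part (2a)
  have part2a : ∀ kk : ℕ, kk < q →
      Nat.card (Subgroup.closure {b, g ^ kk * a} : Subgroup G') = p * q ∧
      Subgroup.closure {b, g ^ kk * a} ⊓ Subgroup.zpowers g = (⊥ : Subgroup G') := by
    intro kk _
    set c : G' := g ^ kk * a with hc
    have hπc : π c = (π g) ^ kk * π a := by rw [hc, map_mul, map_pow]
    have hπcnotin : π c ∉ Subgroup.zpowers (π g) := by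
      intro h1
      apply hπanotin
      have h2 : π a = ((π g) ^ kk)⁻¹ * π c := by rw [hπc]; group
      rw [h2]
      exact Subgroup.mul_mem _
        (Subgroup.inv_mem _ (Subgroup.pow_mem _ (Subgroup.mem_zpowers _) _)) h1
    have hπc_ne : π c ≠ 1 := fun h1 => hπcnotin (h1 ▸ Subgroup.one_mem _)
    have hcne : c ≠ 1 := by
      intro h1
      apply hπc_ne
      rw [h1, map_one]
    have hcq : orderOf c = q := by
      have hdvd : orderOf c ∣ q := by
        apply orderOf_dvd_of_pow_eq_one
        have hgq : g ^ q = 1 := by rw [← hg]; exact pow_orderOf_eq_one g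
        have haq : a ^ q = 1 := by rw [← ha]; exact pow_orderOf_eq_one a
        rw [hc, (hCga.pow_left kk).mul_pow q, ← pow_mul, mul_comm kk q, pow_mul,
          hgq, haq, one_pow, one_mul]
      rcases hq.eq_one_or_self_of_dvd _ hdvd with h1 | h1
      · exact absurd (orderOf_eq_one_iff.mp h1) hcne
      · exact h1
    have hπcq : orderOf (π c) = q := by
      have hdvd : orderOf (π c) ∣ q := hcq ▸ orderOf_map_dvd π c
      rcases hq.eq_one_or_self_of_dvd _ hdvd with h1 | h1
      · exact absurd (orderOf_eq_one_iff.mp h1) hπc_ne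
      · exact h1
    have hbLk : b ∈ Subgroup.closure {b, c} := Subgroup.subset_closure (by simp)
    have hcLk : c ∈ Subgroup.closure {b, c} := Subgroup.subset_closure (by simp)
    have hmapLk : Subgroup.map π (Subgroup.closure {b, c}) = Subgroup.zpowers (π c) := by
      rw [MonoidHom.map_closure]
      have him : ⇑π '' {b, c} = {(1 : G' ⧸ N), π c} := by
        simp [Set.image_insert_eq, hπb]
      rw [him]
      apply le_antisymm
      · refine (Subgroup.closure_le _).2 ?_
        intro x hx
        simp only [Set.mem_insert_iff, Set.mem_singleton_iff] at hx
        rcases hx with h1 | h1 <;> rw [h1]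
        · exact Subgroup.one_mem _
        · exact Subgroup.mem_zpowers _
      · rw [Subgroup.zpowers_eq_closure]
        refine Subgroup.closure_mono ?_
        intro x hx
        simp only [Set.mem_singleton_iff] at hx
        simp [hx]
    have hpd : p ∣ Nat.card (Subgroup.closure {b, c} : Subgroup G') :=
      hb ▸ Subgroup.orderOf_dvd_natCard _ hbLk
    have hqd : q ∣ Nat.card (Subgroup.closure {b, c} : Subgroup G') :=
      hcq ▸ Subgroup.orderOf_dvd_natCard _ hcLk
    have hpqd : p * q ∣ Nat.card (Subgroup.closure {b, c} : Subgroup G') :=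
      Nat.Coprime.mul_dvd_of_dvd_of_dvd hcop hpd hqd
    have hdG : Nat.card (Subgroup.closure {b, c} : Subgroup G') ∣ p * q ^ 2 :=
      hcard ▸ Subgroup.card_subgroup_dvd_card _
    have hLkne : Nat.card (Subgroup.closure {b, c} : Subgroup G') ≠ p * q ^ 2 := by
      intro h1
      have h2 : Subgroup.closure {b, c} = (⊤ : Subgroup G') :=
        Subgroup.eq_top_of_card_eq (H := Subgroup.closure {b, c}) (by rw [h1, hcard])
      have h3 : Subgroup.map π ⊤ = ⊤ := Subgroup.map_top_of_surjective π hπsurj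
      rw [h2, h3] at hmapLk
      have h4 : Nat.card (⊤ : Subgroup (G' ⧸ N)) = q ^ 2 := by
        rw [Subgroup.card_top, hcardQ]
      rw [hmapLk, Nat.card_zpowers, hπcq] at h4
      nlinarith
    have hcardLk : Nat.card (Subgroup.closure {b, c} : Subgroup G') = p * q := by
      obtain ⟨e, he⟩ := hpqd
      have hpqpos : 0 < p * q := Nat.mul_pos hp.pos hq.pos
      have h1 : Nat.card (Subgroup.closure {b, c} : Subgroup G') ∣ p * q * q := by
        rw [show p * q * q = p * q ^ 2 by ring]
        exact hdG
      rw [he] at h1 hLkne ⊢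
      have h2 : e ∣ q := (Nat.mul_dvd_mul_iff_left hpqpos).mp h1
      rcases hq.eq_one_or_self_of_dvd e h2 with h3 | h3
      · rw [h3, mul_one]
      · rw [h3] at hLkne
        exact absurd (by ring) hLkne
    refine ⟨hcardLk, ?_⟩
    rw [eq_bot_iff]
    intro x hx
    rw [Subgroup.mem_inf] at hx
    obtain ⟨hx1, hx2⟩ := hx
    have hπx1 : π x ∈ Subgroup.zpowers (π c) := by
      rw [← hmapLk]
      exact Subgroup.mem_map_of_mem π hx1
    have hπx2 : π x ∈ Subgroup.zpowers (π g) := by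
      obtain ⟨m, hm⟩ := hx2
      exact ⟨m, by rw [← hm, map_zpow]⟩
    have h0 := hinterg (π c) hπcq hπcnotin
    have h1 : π x ∈ Subgroup.zpowers (π c) ⊓ Subgroup.zpowers (π g) :=
      Subgroup.mem_inf.mpr ⟨hπx1, hπx2⟩
    rw [h0] at h1
    have hπx : π x = 1 := Subgroup.mem_bot.mp h1
    have hxN : x ∈ N := (hπeq1 x).mp hπx
    have h2 : x ∈ N ⊓ Subgroup.zpowers g := Subgroup.mem_inf.mpr ⟨hxN, hx2⟩
    rw [hNg] at h2
    exact h2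
  -- Part (2b)
  have part2b : ∀ L : Subgroup G', Nat.card L = p * q → L ⊓ Subgroup.zpowers g = ⊥ →
      ∃ kk : ℕ, kk < q ∧ L = Subgroup.closure {b, g ^ kk * a} := by
    intro L hL hLg
    have hNL := hNle L hL
    have hnotle : ¬(L ≤ N) := by
      intro h1
      have h2 := Subgroup.card_le_of_le h1
      rw [hL, hcardN] at h2
      nlinarith [hp.pos]
    obtain ⟨x, hxL, hxN⟩ := SetLike.not_le_iff_exists.mp hnotle
    have hLg' : ∀ m : ℤ, g ^ m ∈ L → g ^ m = 1 := by
      intro m hm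
      have h1 : g ^ m ∈ L ⊓ Subgroup.zpowers g :=
        Subgroup.mem_inf.mpr ⟨hm, ⟨m, rfl⟩⟩
      rw [hLg] at h1
      exact Subgroup.mem_bot.mp h1
    obtain ⟨i, j, hij⟩ := hdecomp (π x)
    have hiq : ¬((q : ℤ) ∣ i) := by
      intro hdvd
      have hai : (π a) ^ i = 1 :=
        orderOf_dvd_iff_zpow_eq_one.mp (by rw [horderπa]; exact hdvd)
      have hx1 : π x = (π g) ^ j := by rw [hij, hai, one_mul]
      have h2 : π (x⁻¹ * g ^ j) = 1 := by
        rw [map_mul, map_inv, map_zpow, ← hx1]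
        exact inv_mul_cancel _
      have h3 : x⁻¹ * g ^ j ∈ L := hNL ((hπeq1 _).mp h2)
      have h4 : g ^ j ∈ L := by
        have h5 := Subgroup.mul_mem L hxL h3
        rwa [mul_inv_cancel_left] at h5
      have h5 := hLg' j h4
      apply hxN
      apply (hπeq1 x).mp
      rw [hx1, ← map_zpow, h5, map_one]
    set u : ZMod q := (i : ZMod q) with hu
    have hu0 : u ≠ 0 := by
      rw [hu, Ne, ZMod.intCast_zmod_eq_zero_iff_dvd]
      exact hiq
    set n' : ℕ := (u⁻¹ : ZMod q).val with hn'
    have hmul1 : i * (n' : ℤ) ≡ 1 [ZMOD q] := by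
      rw [← ZMod.intCast_eq_intCast_iff]
      push_cast
      rw [hn', ZMod.natCast_val, ZMod.cast_id, ← hu]
      exact mul_inv_cancel₀ hu0
    have hxpow : (π x) ^ (n' : ℤ) = π a * (π g) ^ (j * (n' : ℤ)) := by
      rw [hij, (hC.zpow_zpow i j).mul_zpow, ← zpow_mul, ← zpow_mul]
      congr 1
      have : (π a) ^ (i * (n' : ℤ)) = (π a) ^ (1 : ℤ) := by
        rw [zpow_eq_zpow_iff_modEq, horderπa]
        exact hmul1
      rw [this, zpow_one]
    set m : ℤ := j * (n' : ℤ) with hm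
    set kk : ℕ := (m % (q : ℤ)).toNat with hkk
    have hqpos : (0 : ℤ) < q := by exact_mod_cast hq.pos
    have hkklt : kk < q := by
      have h1 : m % (q : ℤ) < q := Int.emod_lt_of_pos m hqpos
      have h2 : 0 ≤ m % (q : ℤ) := Int.emod_nonneg m hqpos.ne'
      omega
    have hkkm : ((kk : ℤ)) = m % (q : ℤ) := by
      rw [hkk]
      exact Int.toNat_of_nonneg (Int.emod_nonneg m hqpos.ne')
    have hgkk : (π g) ^ m = (π g) ^ (kk : ℤ) := by
      rw [zpow_eq_zpow_iff_modEq, horderπg, hkkm]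
      exact (Int.emod_emod_of_dvd m dvd_rfl).symm
    have hπin : π (g ^ kk * a) ∈ Subgroup.map π L := by
      have h1 : (π x) ^ (n' : ℤ) ∈ Subgroup.map π L :=
        Subgroup.zpow_mem _ (Subgroup.mem_map_of_mem π hxL) _
      have h2 : π (g ^ kk * a) = (π x) ^ (n' : ℤ) := by
        rw [hxpow, map_mul, map_pow]
        rw [show ((π g) ^ kk : G' ⧸ N) = (π g) ^ (kk : ℤ) from (zpow_natCast _ _).symm]
        rw [← hgkk]
        exact ((hC.zpow_right m).eq).symm
      rw [h2]
      exact h1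
    obtain ⟨y, hyL, hy⟩ := Subgroup.mem_map.mp hπin
    have h3 : y⁻¹ * (g ^ kk * a) ∈ N := by
      apply (hπeq1 _).mp
      rw [map_mul, map_inv, hy]
      exact inv_mul_cancel _
    have h4 : g ^ kk * a ∈ L := by
      have h5 := Subgroup.mul_mem L hyL (hNL h3)
      rwa [mul_inv_cancel_left] at h5
    refine ⟨kk, hkklt, ?_⟩
    have hle : Subgroup.closure {b, g ^ kk * a} ≤ L := by
      refine (Subgroup.closure_le _).2 ?_
      intro z hz
      simp only [Set.mem_insert_iff, Set.mem_singleton_iff] at hz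
      rcases hz with h7 | h7 <;> rw [h7]
      · exact hNL hbN
      · exact h4
    exact (Subgroup.eq_of_le_of_card_ge hle
      (by rw [hL, (part2a kk hkklt).1])).symm
  -- Part (2c)
  have part2c : ∀ kk kk' : ℕ, kk < q → kk' < q →
      (Subgroup.closure {b, g ^ kk * a} : Subgroup G') = Subgroup.closure {b, g ^ kk' * a} →
        kk = kk' := by
    intro kk kk' hkk hkk' heq
    have h1 : g ^ kk * a ∈ Subgroup.closure {b, g ^ kk' * a} := by
      rw [← heq]
      exact Subgroup.subset_closure (by simp)
    have h2 : g ^ kk' * a ∈ Subgroup.closure {b, g ^ kk' * a} :=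
      Subgroup.subset_closure (by simp)
    have h3 : (g ^ kk * a) * (g ^ kk' * a)⁻¹ ∈ Subgroup.closure {b, g ^ kk' * a} :=
      Subgroup.mul_mem _ h1 (Subgroup.inv_mem _ h2)
    have h4 : (g ^ kk * a) * (g ^ kk' * a)⁻¹ = g ^ kk * (g ^ kk')⁻¹ := by group
    have h5 : (g ^ kk * a) * (g ^ kk' * a)⁻¹ ∈ Subgroup.zpowers g := by
      rw [h4]
      exact Subgroup.mul_mem _ (Subgroup.pow_mem _ (Subgroup.mem_zpowers g) kk)
        (Subgroup.inv_mem _ (Subgroup.pow_mem _ (Subgroup.mem_zpowers g) kk'))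
    have h6 := (part2a kk' hkk').2
    have h7 : (g ^ kk * a) * (g ^ kk' * a)⁻¹ = 1 := by
      have h8 : (g ^ kk * a) * (g ^ kk' * a)⁻¹ ∈
          Subgroup.closure {b, g ^ kk' * a} ⊓ Subgroup.zpowers g :=
        Subgroup.mem_inf.mpr ⟨h3, h5⟩
      rw [h6] at h8
      exact Subgroup.mem_bot.mp h8
    have h8 : g ^ kk = g ^ kk' := mul_right_cancel (mul_inv_eq_one.mp h7)
    have h10 : kk ≡ kk' [MOD q] := by
      have h9 := pow_eq_pow_iff_modEq.mp h8
      rwa [hg] at h9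
    have h11 := h10
    rw [Nat.ModEq, Nat.mod_eq_of_lt hkk, Nat.mod_eq_of_lt hkk'] at h11
    exact h11
  exact ⟨part1, part2a, part2b, part2c⟩
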